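/- arXiv:1312.5038 — 8 statements merged into one kernel-verified Lean document; each statement's English description precedes it below -/
import Mathlib

section
/- For every real p with 0 < p < 1, there exists a unique real number α > 0 satisfying the equation (1−p)·(α^{1/(1−p)} + 1) = α + 1. -/
/-- For every real `p` with `0 < p < 1`, there exists a unique real `α > 0` satisfying
`(1−p)·(α^(1/(1−p)) + 1) = α + 1`. -/
theorem unique_alpha (p : ℝ) (hp : 0 < p) (hp1 : p < 1) :
    ∃! α : ℝ, 0 < α ∧ (1 - p) * (α ^ (1 / (1 - p)) + 1) = α + 1 := by
  have h1p : (0:ℝ) < 1 - p := by linarith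
  set q : ℝ := 1 / (1 - p) with hq_def
  have hq1 : 1 < q := by
    rw [hq_def]
    rw [lt_div_iff₀ h1p]
    linarith
  have hq0 : 0 < q := lt_trans one_pos hq1
  set g : ℝ → ℝ := fun x => (1 - p) * (x ^ q + 1) - (x + 1) with hg_def
  -- g is negative on (0, 1]
  have hneg : ∀ x : ℝ, 0 < x → x ≤ 1 → g x < 0 := by
    intro x hx hx1
    have h1 : x ^ q ≤ x ^ (1:ℝ) :=
      Real.rpow_le_rpow_of_exponent_ge hx hx1 hq1.le
    rw [Real.rpow_one] at h1
    have h2 : (1 - p) * (x ^ q + 1) ≤ (1 - p) * (x + 1) := by nlinarith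
    have h3 : (1 - p) * (x + 1) < 1 * (x + 1) := by nlinarith
    simp only [hg_def]
    nlinarith
  -- continuity of g on [1, ∞)
  have hcont : ContinuousOn g (Set.Ici 1) := by
    apply ContinuousOn.sub
    · apply ContinuousOn.mul continuousOn_const
      apply ContinuousOn.add _ continuousOn_const
      intro x hx
      have hx0 : x ≠ 0 := by
        have : (1:ℝ) ≤ x := hx
        linarith
      exact (Real.continuousAt_rpow_const x q (Or.inl hx0)).continuousWithinAt
    · exact (continuous_id.add continuous_const).continuousOn
  -- derivative positivity on (1, ∞)
  have hderiv : ∀ x ∈ interior (Set.Ici (1:ℝ)), 0 < deriv g x := by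
    intro x hx
    rw [interior_Ici] at hx
    have hx1 : (1:ℝ) < x := hx
    have hx0 : x ≠ 0 := by linarith
    have hd : HasDerivAt g ((1 - p) * (q * x ^ (q - 1)) - 1) x := by
      have h1 : HasDerivAt (fun y : ℝ => y ^ q) (q * x ^ (q - 1)) x :=
        Real.hasDerivAt_rpow_const (Or.inl hx0)
      have h2 : HasDerivAt (fun y : ℝ => (1 - p) * (y ^ q + 1))
          ((1 - p) * (q * x ^ (q - 1))) x := by
        simpa using ((h1.add_const 1).const_mul (1 - p))
      exact h2.sub ((hasDerivAt_id x).add_const 1)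
    rw [hd.deriv]
    have hpq : (1 - p) * q = 1 := by
      rw [hq_def]
      field_simp
    have : (1 - p) * (q * x ^ (q - 1)) = x ^ (q - 1) := by
      rw [← mul_assoc, hpq, one_mul]
    rw [this]
    have : 1 < x ^ (q - 1) :=
      Real.one_lt_rpow_iff_of_pos (by linarith) |>.mpr (Or.inl ⟨hx1, by linarith⟩)
    linarith
  have hmono : StrictMonoOn g (Set.Ici 1) :=
    strictMonoOn_of_deriv_pos (convex_Ici 1) hcont hderiv
  -- find M with g M ≥ 0
  obtain ⟨M, hM1, hMpos⟩ : ∃ M : ℝ, 1 ≤ M ∧ 0 ≤ g M := by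
    set B : ℝ := (2 / (1 - p)) ^ (q - 1)⁻¹ with hB_def
    refine ⟨max 1 B, le_max_left _ _, ?_⟩
    set M := max 1 B with hM_def
    have hM1 : (1:ℝ) ≤ M := le_max_left _ _
    have hMB : B ≤ M := le_max_right _ _
    have hM0 : (0:ℝ) < M := by linarith
    have hBpos : (0:ℝ) < B := by
      apply Real.rpow_pos_of_pos
      positivity
    have hMq : 2 / (1 - p) ≤ M ^ (q - 1) := by
      have h1 : B ^ (q - 1) ≤ M ^ (q - 1) :=
        Real.rpow_le_rpow hBpos.le hMB (by linarith)
      have h2 : B ^ (q - 1) = 2 / (1 - p) := by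
        rw [hB_def, ← Real.rpow_mul (by positivity)]
        rw [inv_mul_cancel₀ (by linarith : q - 1 ≠ 0), Real.rpow_one]
      · rw [← h2]; exact h1
    -- (1-p) * M^q ≥ 2M ≥ M + 1
    have hMq' : 2 * M ≤ (1 - p) * M ^ q := by
      have h1 : M ^ q = M ^ (q - 1) * M := by
        rw [← Real.rpow_add_one (by linarith : M ≠ 0) (q-1)]
        norm_num
      rw [h1]
      have h2 : 2 / (1 - p) * M ≤ M ^ (q - 1) * M := by
        apply mul_le_mul_of_nonneg_right hMq hM0.le
      calc 2 * M = (1 - p) * (2 / (1 - p) * M) := by field_simp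
        _ ≤ (1 - p) * (M ^ (q - 1) * M) := by nlinarith
        _ = (1 - p) * M ^ (q - 1) * M := by ring
        _ = (1 - p) * (M ^ (q - 1) * M) := by ring
    simp only [hg_def]
    nlinarith
  -- g 1 < 0
  have hg1 : g 1 < 0 := hneg 1 one_pos le_rfl
  -- IVT
  obtain ⟨c, hcmem, hc⟩ : ∃ c ∈ Set.Icc (1:ℝ) M, g c = 0 := by
    have := intermediate_value_Icc hM1 (hcont.mono (Set.Icc_subset_Ici_self))
    exact this ⟨hg1.le, hMpos⟩
  have hc1 : 1 ≤ c := hcmem.1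
  have hcpos : 0 < c := by linarith
  -- any root is > 1, in particular in Ici 1
  have hroot_ge : ∀ y : ℝ, 0 < y → g y = 0 → 1 ≤ y := by
    intro y hy hgy
    by_contra h
    push_neg at h
    exact absurd hgy (ne_of_lt (hneg y hy h.le))
  have hkey : ∀ y : ℝ, (0 < y ∧ (1 - p) * (y ^ (1 / (1 - p)) + 1) = y + 1) ↔
      (0 < y ∧ g y = 0) := by
    intro y
    simp only [hg_def, hq_def]
    constructor
    · rintro ⟨h1, h2⟩; exact ⟨h1, by linarith⟩
    · rintro ⟨h1, h2⟩; exact ⟨h1, by linarith⟩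
  refine ⟨c, ?_, ?_⟩
  · exact (hkey c).mpr ⟨hcpos, hc⟩
  · intro y hy
    obtain ⟨hy0, hgy⟩ := (hkey y).mp hy
    exact hmono.injOn (hroot_ge y hy0 hgy) hc1 (hgy.trans hc.symm)
end

section
/- Let 0 < p < 1 satisfy 1/p − 1 ≥ (1/p − 1)^{1−p} + 1, and set α = ((1−p)/p)^{1−p} and C = (1−p)/p. Then for all real z < 0 and all real x ≥ z, one has α^{−1}·(−z)^{p−1}·(p·x − (p−1)·z) ≥ |x|^p − C^p·(−z)^p. -/
/-- Tangent line inequality for concave `x ^ p`, `0 ≤ p ≤ 1`. -/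
lemma rpow_tangent_le (p : ℝ) (hp : 0 ≤ p) (hp1 : p ≤ 1) {x y : ℝ}
    (hy : 0 < y) (hx : 0 ≤ x) :
    x ^ p ≤ y ^ p + p * y ^ (p - 1) * (x - y) := by
  have hs : -1 ≤ x / y - 1 := by
    have : 0 ≤ x / y := div_nonneg hx hy.le
    linarith
  have hB := rpow_one_add_le_one_add_mul_self hs hp hp1
  have hxy : (1 : ℝ) + (x / y - 1) = x / y := by ring
  rw [hxy] at hB
  have hdiv : (x / y) ^ p = x ^ p / y ^ p := Real.div_rpow hx hy.le p
  rw [hdiv] at hB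
  have hyp : (0 : ℝ) < y ^ p := Real.rpow_pos_of_pos hy p
  have hmul := mul_le_mul_of_nonneg_right hB hyp.le
  rw [div_mul_cancel₀ _ hyp.ne'] at hmul
  have hyy : y ^ (p - 1) * y = y ^ p := by
    rw [← Real.rpow_add_one hy.ne' (p - 1)]; norm_num
  calc x ^ p ≤ (1 + p * (x / y - 1)) * y ^ p := hmul
    _ = y ^ p + p * y ^ p * (x / y) - p * y ^ p := by ring
    _ = y ^ p + p * y ^ (p - 1) * (x - y) := by
        rw [← hyy]; field_simp; ring

/-- Majorization property of `U(x,z) = α⁻¹(−z)^(p−1)[px − (p−1)z]` in the range `p ≤ p₀`: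
if `0 < p < 1` with `1/p − 1 ≥ (1/p − 1)^(1−p) + 1`, `α = ((1−p)/p)^(1−p)`, `C = (1−p)/p`,
then for all `z < 0` and `x ≥ z`, `U(x,z) ≥ |x|^p − C^p(−z)^p`. -/
theorem majorization_small_p (p : ℝ) (hp : 0 < p) (hp1 : p < 1)
    (hrange : 1 / p - 1 ≥ (1 / p - 1) ^ (1 - p) + 1)
    (z x : ℝ) (hz : z < 0) (hxz : z ≤ x) :
    (((1 - p) / p) ^ (1 - p))⁻¹ * (-z) ^ (p - 1) * (p * x - (p - 1) * z)
      ≥ |x| ^ p - ((1 - p) / p) ^ p * (-z) ^ p := by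
  set C : ℝ := (1 - p) / p with hCdef
  set w : ℝ := -z with hwdef
  have hC : 0 < C := div_pos (by linarith) hp
  have hw : 0 < w := by simp [hwdef]; linarith
  have hzw : z = -w := by simp [hwdef]
  have hinv : (C ^ (1 - p))⁻¹ = C ^ (p - 1) := by
    rw [← Real.rpow_neg hC.le]; ring_nf
  have hpc : p * C = 1 - p := by
    rw [hCdef]; field_simp
  rw [hinv]
  have e3 : w ^ (p - 1) * w = w ^ p := by
    rw [← Real.rpow_add_one hw.ne' (p - 1)]; norm_num
  rcases le_or_gt 0 x with hx | hx
  · -- x ≥ 0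
    rw [abs_of_nonneg hx]
    have ht := rpow_tangent_le p hp.le hp1.le (mul_pos hC hw) hx
    have h1 : (C * w) ^ p = C ^ p * w ^ p := Real.mul_rpow hC.le hw.le
    have h2 : (C * w) ^ (p - 1) = C ^ (p - 1) * w ^ (p - 1) :=
      Real.mul_rpow hC.le hw.le
    rw [h1, h2] at ht
    have key : C ^ (p - 1) * w ^ (p - 1) * (p * x - (p - 1) * z)
        = C ^ p * w ^ p + p * (C ^ (p - 1) * w ^ (p - 1)) * (x - C * w)
          - C ^ p * w ^ p := by
      rw [hzw]
      linear_combination (C ^ (p - 1) * w ^ (p - 1) * w) * hpc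
    rw [key]
    linarith
  · -- z ≤ x < 0
    rw [abs_of_neg hx]
    set u : ℝ := -x with hudef
    have hu0 : 0 ≤ u := by simp [hudef]; linarith
    have huw : u ≤ w := by simp [hudef, hwdef]; linarith
    have hup : u ^ p ≤ w ^ p := Real.rpow_le_rpow hu0 huw hp.le
    have hwpm : (0 : ℝ) < w ^ (p - 1) := Real.rpow_pos_of_pos hw _
    have hCpm : (0 : ℝ) < C ^ (p - 1) := Real.rpow_pos_of_pos hC _
    have hwp : (0 : ℝ) < w ^ p := Real.rpow_pos_of_pos hw _
    have hmul : w ^ (p - 1) * u ≤ w ^ p := by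
      calc w ^ (p - 1) * u ≤ w ^ (p - 1) * w :=
            mul_le_mul_of_nonneg_left huw hwpm.le
        _ = w ^ p := e3
    -- from hrange: C ^ p ≥ 1 + C ^ (p - 1)
    have hC' : C ≥ C ^ (1 - p) + 1 := by
      have : 1 / p - 1 = C := by rw [hCdef]; field_simp
      rwa [this] at hrange
    have e1 : C * C ^ (p - 1) = C ^ p := by
      rw [mul_comm, ← Real.rpow_add_one hC.ne' (p - 1)]; norm_num
    have e2 : C ^ (1 - p) * C ^ (p - 1) = 1 := by
      rw [← Real.rpow_add hC]; norm_num
    have hCp : 1 + C ^ (p - 1) ≤ C ^ p := by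
      have := mul_le_mul_of_nonneg_right hC' hCpm.le
      nlinarith [this]
    have hxu : x = -u := by simp [hudef]
    rw [hxu, hzw]
    have expand : C ^ (p - 1) * w ^ (p - 1) * (p * (-u) - (p - 1) * (-w))
        = -(p * (C ^ (p - 1) * (w ^ (p - 1) * u))) + (p - 1) * (C ^ (p - 1) * w ^ p) := by
      rw [← e3]; ring
    rw [expand]
    have step1 : p * (C ^ (p - 1) * (w ^ (p - 1) * u))
        ≤ p * (C ^ (p - 1) * w ^ p) := by
      apply mul_le_mul_of_nonneg_left _ hp.le
      exact mul_le_mul_of_nonneg_left hmul hCpm.le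
    have step2 : (1 + C ^ (p - 1)) * w ^ p ≤ C ^ p * w ^ p :=
      mul_le_mul_of_nonneg_right hCp hwp.le
    nlinarith [step1, step2, hup, mul_pos hCpm hwp]
end

section
/- Let 0 < p < 1 satisfy 1/p − 1 < (1/p − 1)^{1−p} + 1, let α > 0 satisfy (1−p)·(α^{1/(1−p)} + 1) = α + 1, and set C = (1 + α^{−1})^{1/p}. Then for all real z < 0 and all real x ≥ z, one has α^{−1}·(−z)^{p−1}·(p·x − (p−1)·z) ≥ |x|^p − C^p·(−z)^p. -/
/-- Concavity of `x ^ p` for `0 ≤ p ≤ 1`: the graph lies below its tangent line at `b`. -/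
lemma rpow_le_tangent {p a b : ℝ} (hp : 0 ≤ p) (hp1 : p ≤ 1) (ha : 0 ≤ a) (hb : 0 < b) :
    a ^ p ≤ b ^ p + p * b ^ (p - 1) * (a - b) := by
  have hab : (0:ℝ) ≤ a / b := div_nonneg ha hb.le
  have h := rpow_one_add_le_one_add_mul_self (s := a / b - 1) (by linarith) hp hp1
  rw [add_sub_cancel] at h
  have hbp : (0:ℝ) < b ^ p := Real.rpow_pos_of_pos hb p
  have key : (a / b) ^ p * b ^ p ≤ (1 + p * (a / b - 1)) * b ^ p :=
    mul_le_mul_of_nonneg_right h hbp.le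
  rw [Real.div_rpow ha hb.le, div_mul_cancel₀ _ hbp.ne'] at key
  have hb1 : b ^ (p - 1) = b ^ p / b := by
    rw [Real.rpow_sub hb, Real.rpow_one]
  rw [hb1]
  calc a ^ p ≤ (1 + p * (a / b - 1)) * b ^ p := key
    _ = b ^ p + p * (b ^ p / b) * (a - b) := by field_simp

/-- Majorization property of `U(x,z) = α⁻¹(−z)^(p−1)[px − (p−1)z]` in the range `p > p₀`:
if `0 < p < 1` with `1/p − 1 < (1/p − 1)^(1−p) + 1`, `α > 0` satisfies
`(1−p)(α^(1/(1−p)) + 1) = α + 1` and `C = (1 + α⁻¹)^(1/p)`, then for all `z < 0` and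
`x ≥ z`, `U(x,z) ≥ |x|^p − C^p(−z)^p`. -/
theorem majorization_large_p (p : ℝ) (hp : 0 < p) (hp1 : p < 1)
    (hrange : 1 / p - 1 < (1 / p - 1) ^ (1 - p) + 1)
    (α : ℝ) (hα : 0 < α) (hαeq : (1 - p) * (α ^ (1 / (1 - p)) + 1) = α + 1)
    (z x : ℝ) (hz : z < 0) (hxz : z ≤ x) :
    α⁻¹ * (-z) ^ (p - 1) * (p * x - (p - 1) * z)
      ≥ |x| ^ p - ((1 + α⁻¹) ^ (1 / p)) ^ p * (-z) ^ p := by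
  set s : ℝ := -z with hsdef
  have hs : 0 < s := by simp [hsdef]; linarith
  have hαinv : (0:ℝ) < α⁻¹ := inv_pos.mpr hα
  -- simplify C^p
  have hC : ((1 + α⁻¹) ^ (1 / p)) ^ p = 1 + α⁻¹ := by
    rw [← Real.rpow_mul (by positivity), one_div_mul_cancel hp.ne', Real.rpow_one]
  rw [hC]
  -- key reduction: suffices `|x|^p ≤ α⁻¹ * p * s^(p-1) * (x + s) + s^p`
  have key : |x| ^ p ≤ α⁻¹ * p * s ^ (p - 1) * (x + s) + s ^ p := by
    rcases le_or_gt x 0 with hx | hx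
    · have h1 : |x| = -x := abs_of_nonpos hx
      have h2 : (-x) ^ p ≤ s ^ p := Real.rpow_le_rpow (by linarith) (by simp [hsdef]; linarith) hp.le
      have h3 : 0 ≤ α⁻¹ * p * s ^ (p - 1) * (x + s) := by
        have : (0:ℝ) ≤ x + s := by simp [hsdef]; linarith
        positivity
      rw [h1]; linarith
    · rw [abs_of_pos hx]
      set t : ℝ := α ^ (1 / (1 - p)) with htdef
      have ht : 0 < t := Real.rpow_pos_of_pos hα _
      have hT : (1 - p) * t = α + p := by rw [htdef]; linarith [hαeq]
      have htp : t ^ (p - 1) = α⁻¹ := by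
        rw [htdef, ← Real.rpow_mul hα.le, one_div, inv_mul_eq_div]
        have : (p - 1) / (1 - p) = -1 := by
          rw [div_eq_iff (by linarith : (1:ℝ) - p ≠ 0)]; ring
        rw [this, Real.rpow_neg_one]
      have hconc := rpow_le_tangent hp.le hp1.le hx.le (mul_pos ht hs) (a := x) (b := t * s)
      have hb1 : (t * s) ^ (p - 1) = α⁻¹ * s ^ (p - 1) := by
        rw [Real.mul_rpow ht.le hs.le, htp]
      have hbp : (t * s) ^ p = α⁻¹ * s ^ (p - 1) * (t * s) := by
        have : (t * s) ^ p = (t * s) ^ (p - 1) * (t * s) := by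
          rw [← Real.rpow_add_one (by positivity) (p - 1)]; ring_nf
        rw [this, hb1]
      rw [hbp, hb1] at hconc
      have hsp : s ^ p = s ^ (p - 1) * s := by
        rw [← Real.rpow_add_one hs.ne' (p - 1)]; ring_nf
      rw [hsp]
      have hA : 0 < s ^ (p - 1) := Real.rpow_pos_of_pos hs _
      -- tangent line value equals the target line, using (1-p)t = α+p
      have hα1 : α⁻¹ * α = 1 := inv_mul_cancel₀ hα.ne'
      have heq : α⁻¹ * s ^ (p - 1) * (t * s) + p * (α⁻¹ * s ^ (p - 1)) * (x - t * s)
          = α⁻¹ * p * s ^ (p - 1) * (x + s) + s ^ (p - 1) * s := by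
        linear_combination (α⁻¹ * s ^ (p - 1) * s) * hT + (s ^ (p - 1) * s) * hα1
      linarith [hconc, heq.symm.le]
  have hsp' : (-z) ^ p = s ^ p := by rw [hsdef]
  have hsp1 : (-z) ^ (p - 1) = s ^ (p - 1) := by rw [hsdef]
  rw [hsp', hsp1, ge_iff_le]
  have hexp : α⁻¹ * s ^ (p - 1) * (p * x - (p - 1) * z)
      = α⁻¹ * p * s ^ (p - 1) * (x + s) - α⁻¹ * (s ^ (p - 1) * s) := by
    simp only [hsdef]; ring
  have hsp : s ^ p = s ^ (p - 1) * s := by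
    rw [← Real.rpow_add_one hs.ne' (p - 1)]; ring_nf
  rw [hsp] at key ⊢
  rw [hexp]
  nlinarith [key, mul_pos (Real.rpow_pos_of_pos hs (p-1)) hs, hαinv]
end

section
/- For every real p with 1/2 < p < 1, one has 1 + ∫_1^∞ s^{p−1}/(s+1) ds > (1/p − 1)^p + ∫_{1/p−1}^∞ s^{p−1}/(s+1) ds; that is, 𝔠_p > c_p in this range. -/
open MeasureTheory

/-- For every `1/2 < p < 1`, one has `𝔠_p > c_p`, i.e.
`1 + ∫_1^∞ s^(p−1)/(s+1) ds > (1/p − 1)^p + ∫_{1/p−1}^∞ s^(p−1)/(s+1) ds`. -/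
theorem frak_cp_gt_cp (p : ℝ) (hp : 1 / 2 < p) (hp1 : p < 1) :
    1 + (∫ s in Set.Ioi (1 : ℝ), s ^ (p - 1) / (s + 1))
      > (1 / p - 1) ^ p + ∫ s in Set.Ioi (1 / p - 1), s ^ (p - 1) / (s + 1) := by
  set a : ℝ := 1 / p - 1 with ha_def
  have hp0 : (0:ℝ) < p := by linarith
  have ha0 : 0 < a := by
    rw [ha_def, sub_pos, lt_div_iff₀ hp0]; linarith
  have ha1 : a < 1 := by
    rw [ha_def, sub_lt_iff_lt_add, div_lt_iff₀ hp0]; linarith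
  set f : ℝ → ℝ := fun s => s ^ (p - 1) / (s + 1) with hf_def
  have hcont : ContinuousOn f (Set.Ici a) := by
    apply ContinuousOn.div
    · apply ContinuousOn.rpow_const continuousOn_id
      intro x hx; left
      exact ne_of_gt (lt_of_lt_of_le ha0 hx)
    · exact (continuous_id.add continuous_const).continuousOn
    · intro x hx
      have : 0 < x := lt_of_lt_of_le ha0 hx
      positivity
  -- integrability on Ioi 1
  have hInt1 : IntegrableOn f (Set.Ioi (1:ℝ)) := by
    have hg : IntegrableOn (fun s : ℝ => s ^ (p - 2)) (Set.Ioi (1:ℝ)) := by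
      rw [integrableOn_Ioi_rpow_iff zero_lt_one]; linarith
    refine hg.mono' ((hcont.mono ?_).aestronglyMeasurable measurableSet_Ioi) ?_
    · exact fun x hx => le_of_lt (lt_of_le_of_lt ha1.le hx)
    · filter_upwards [ae_restrict_mem measurableSet_Ioi] with x hx
      have hx1 : (1:ℝ) < x := hx
      have hx0 : (0:ℝ) < x := by linarith
      have hfx : 0 ≤ f x := by
        apply div_nonneg (Real.rpow_nonneg hx0.le _); linarith
      rw [Real.norm_eq_abs, abs_of_nonneg hfx]
      have h1 : f x ≤ x ^ (p - 1) / x := by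
        apply div_le_div_of_nonneg_left (Real.rpow_nonneg hx0.le _) hx0
        linarith
      have h2 : x ^ (p - 2) = x ^ (p - 1) / x := by
        rw [show p - 2 = p - 1 - 1 from by ring]
        exact (Real.rpow_sub hx0 _ _).trans (by rw [Real.rpow_one])
      linarith
  -- integrability on Ioc a 1
  have hIntc : IntegrableOn f (Set.Ioc a 1) := by
    refine ((hcont.mono ?_).integrableOn_Icc).mono_set Set.Ioc_subset_Icc_self
    exact fun x hx => hx.1
  -- split the integral
  have hsplit : (∫ s in Set.Ioi a, f s)
      = (∫ s in Set.Ioc a 1, f s) + ∫ s in Set.Ioi (1:ℝ), f s := by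
    rw [← setIntegral_union (Set.Ioc_disjoint_Ioi le_rfl) measurableSet_Ioi hIntc hInt1,
      Set.Ioc_union_Ioi_eq_Ioi ha1.le]
  -- strict bound on the middle piece
  have hkey : (∫ s in Set.Ioc a 1, f s) < 1 - a ^ p := by
    have h1 : (∫ s in Set.Ioc a 1, f s) = ∫ s in a..1, f s :=
      (intervalIntegral.integral_of_le ha1.le).symm
    have h2 : (∫ s in a..1, f s) < ∫ s in a..1, p * s ^ (p - 1) := by
      apply intervalIntegral.integral_lt_integral_of_continuousOn_of_le_of_exists_lt ha1
        (hcont.mono (fun x hx => hx.1))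
      · apply ContinuousOn.mul continuousOn_const
        apply ContinuousOn.rpow_const continuousOn_id
        intro x hx; left; exact ne_of_gt (lt_of_lt_of_le ha0 hx.1)
      · intro x hx
        have hx0 : 0 < x := lt_trans ha0 hx.1
        have hx1 : 0 < x + 1 := by linarith
        rw [hf_def, div_le_iff₀ hx1]
        have hpa : 1 ≤ p * (x + 1) := by
          have : a + 1 ≤ x + 1 := by linarith [hx.1]
          have h3 : p * (a + 1) = 1 := by
            rw [ha_def, sub_add_cancel, mul_one_div_cancel hp0.ne']
          nlinarith
        nlinarith [Real.rpow_nonneg hx0.le (p - 1)]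
      · refine ⟨1, Set.right_mem_Icc.2 ha1.le, ?_⟩
        simp [hf_def]
        linarith
    have h3 : (∫ s in a..1, p * s ^ (p - 1)) = 1 - a ^ p := by
      rw [intervalIntegral.integral_const_mul,
        integral_rpow (Or.inl (by linarith : (-1:ℝ) < p - 1))]
      have : p - 1 + 1 = p := by ring
      rw [this, Real.one_rpow]
      field_simp
    linarith
  rw [hsplit]
  linarith
end

section
/- Let 0 < p < 1 and define, for real x, y ≥ 0 and z < 0: U(x,y,z) = y^p − c_p^p·(−z)^p + p·(x−z)·(−z)^{p−1}·∫_{−y/z}^∞ r^{p−1}/(r+1) dr if y > −(1/p − 1)·z, and U(x,y,z) = ((1/p − 1)^p − c_p^p)·(−z)^p + p·(x−z)·(−z)^{p−1}·∫_{1/p−1}^∞ r^{p−1}/(r+1) dr if y ≤ −(1/p − 1)·z. Then for all z < 0, y ≥ 0 and x ≥ z, one has U(x,y,z) ≥ y^p − c_p^p·(−z)^p. -/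
open MeasureTheory

/-- The special function `U(x,y,z)` used in the proof of `‖M⁺‖_p ≤ c_p‖M⁻‖_p`,
with `c_p^p = (1/p − 1)^p + ∫_{1/p−1}^∞ s^(p−1)/(s+1) ds`. -/
noncomputable def specialU (p : ℝ) (x y z : ℝ) : ℝ :=
  if y > -(1 / p - 1) * z then
    y ^ p - ((1 / p - 1) ^ p + ∫ s in Set.Ioi (1 / p - 1), s ^ (p - 1) / (s + 1)) * (-z) ^ p
      + p * (x - z) * (-z) ^ (p - 1) * ∫ r in Set.Ioi (-y / z), r ^ (p - 1) / (r + 1)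
  else
    ((1 / p - 1) ^ p
        - ((1 / p - 1) ^ p + ∫ s in Set.Ioi (1 / p - 1), s ^ (p - 1) / (s + 1))) * (-z) ^ p
      + p * (x - z) * (-z) ^ (p - 1) * ∫ r in Set.Ioi (1 / p - 1), r ^ (p - 1) / (r + 1)

lemma integrand_nonneg_aux (p a : ℝ) (ha : 0 ≤ a) :
    0 ≤ ∫ r in Set.Ioi a, r ^ (p - 1) / (r + 1) := by
  apply setIntegral_nonneg measurableSet_Ioi
  intro r hr
  have hr0 : 0 ≤ r := le_trans ha (le_of_lt hr)
  exact div_nonneg (Real.rpow_nonneg hr0 _) (by linarith)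

/-- Majorization: for `0 < p < 1`, all `z < 0`, `y ≥ 0` and `x ≥ z`,
`U(x,y,z) ≥ y^p − c_p^p·(−z)^p`. -/
theorem specialU_majorization (p : ℝ) (hp : 0 < p) (hp1 : p < 1)
    (z y x : ℝ) (hz : z < 0) (hy : 0 ≤ y) (hxz : z ≤ x) :
    specialU p x y z
      ≥ y ^ p - ((1 / p - 1) ^ p + ∫ s in Set.Ioi (1 / p - 1), s ^ (p - 1) / (s + 1))
          * (-z) ^ p := by
  have hq : 0 < 1 / p - 1 := by
    have : 1 < 1 / p := (one_lt_one_div hp hp1)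
    linarith
  have hnz : 0 < -z := by linarith
  have hfac : 0 ≤ p * (x - z) * (-z) ^ (p - 1) :=
    mul_nonneg (mul_nonneg hp.le (by linarith)) (Real.rpow_nonneg hnz.le _)
  unfold specialU
  split_ifs with h
  · have h1 : 0 ≤ -y / z := by
      rw [neg_div, ← div_neg]
      exact div_nonneg hy hnz.le
    nlinarith [mul_nonneg hfac (integrand_nonneg_aux p _ h1)]
  · push_neg at h
    have hyz : y ^ p ≤ (1 / p - 1) ^ p * (-z) ^ p := by
      rw [← Real.mul_rpow hq.le hnz.le]
      apply Real.rpow_le_rpow hy _ hp.le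
      calc y ≤ -(1 / p - 1) * z := h
        _ = (1 / p - 1) * -z := by ring
    nlinarith [mul_nonneg hfac (integrand_nonneg_aux p _ hq.le)]
end

section
/- Let 0 < p < 1 and define, for real x, y ≥ 0 and z < 0: U(x,y,z) = y^p − c_p^p·(−z)^p + p·(x−z)·(−z)^{p−1}·∫_{−y/z}^∞ r^{p−1}/(r+1) dr if y > −(1/p − 1)·z, and U(x,y,z) = ((1/p − 1)^p − c_p^p)·(−z)^p + p·(x−z)·(−z)^{p−1}·∫_{1/p−1}^∞ r^{p−1}/(r+1) dr if y ≤ −(1/p − 1)·z. Then for all z < 0, all x, y with z ≤ x ≤ y and y ≥ 0, and all d ≥ 0, one has U(x+d, max(x+d, y), z) ≤ U(x,y,z) + d·p·(−z)^{p−1}·∫_{max(−y/z, 1/p−1)}^∞ r^{p−1}/(r+1) dr. -/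
open MeasureTheory Set

lemma sUaux_integrableOn {p : ℝ} (hp : 0 < p) (hp1 : p < 1) {a : ℝ} (ha : 0 < a) :
    IntegrableOn (fun r : ℝ => r ^ (p - 1) / (r + 1)) (Ioi a) := by
  have h2 : IntegrableOn (fun r : ℝ => r ^ (p - 2)) (Ioi a) :=
    integrableOn_Ioi_rpow_of_lt (by linarith) ha
  refine h2.mono' ?_ ?_
  · apply Measurable.aestronglyMeasurable
    fun_prop
  · filter_upwards [ae_restrict_mem measurableSet_Ioi] with r hr
    have hr0 : 0 < r := ha.trans hr
    have hnn : 0 ≤ r ^ (p - 1) := Real.rpow_nonneg hr0.le _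
    rw [Real.norm_of_nonneg (by positivity)]
    have : r ^ (p - 2) = r ^ (p - 1) / r := by
      rw [show p - 2 = (p-1) - 1 by ring, Real.rpow_sub hr0, Real.rpow_one]
    rw [this]
    gcongr
    linarith

lemma sUaux_split {p : ℝ} (hp : 0 < p) (hp1 : p < 1) {a b : ℝ} (ha : 0 < a) (hab : a ≤ b) :
    (∫ r in Ioi a, r ^ (p - 1) / (r + 1)) - ∫ r in Ioi b, r ^ (p - 1) / (r + 1)
      = ∫ r in Ioc a b, r ^ (p - 1) / (r + 1) := by
  have h : (∫ r in Ioi a, r ^ (p - 1) / (r + 1))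
      = (∫ r in Ioc a b, r ^ (p - 1) / (r + 1)) + ∫ r in Ioi b, r ^ (p - 1) / (r + 1) := by
    rw [← Ioc_union_Ioi_eq_Ioi hab,
      setIntegral_union Ioc_disjoint_Ioi_same measurableSet_Ioi
        ((sUaux_integrableOn hp hp1 ha).mono_set Ioc_subset_Ioi_self)
        (sUaux_integrableOn hp hp1 (ha.trans_le hab))]
  linarith

lemma sUaux_key {p : ℝ} (hp : 0 < p) (hp1 : p < 1) {a b : ℝ} (ha : 0 < a) (hab : a ≤ b) :
    b ^ p - a ^ p ≤ p * (b + 1) * ∫ r in Ioc a b, r ^ (p - 1) / (r + 1) := by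
  have hcont1 : ContinuousOn (fun r : ℝ => r ^ (p - 1)) (Icc a b) := by
    intro x hx
    exact (Real.continuousAt_rpow_const x _
      (Or.inl (ne_of_gt (ha.trans_le hx.1)))).continuousWithinAt
  have hcont2 : ContinuousOn (fun r : ℝ => r ^ (p - 1) / (r + 1)) (Icc a b) :=
    hcont1.div (Continuous.continuousOn (by continuity))
      (fun x hx => by have := ha.trans_le hx.1; positivity)
  have hI1 : IntervalIntegrable (fun r : ℝ => r ^ (p - 1)) volume a b := by
    apply ContinuousOn.intervalIntegrable; rwa [uIcc_of_le hab]
  have hI2 : IntervalIntegrable (fun r : ℝ => r ^ (p - 1) / (r + 1)) volume a b := by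
    apply ContinuousOn.intervalIntegrable; rwa [uIcc_of_le hab]
  have h1 : ∫ x in a..b, x ^ (p - 1) = (b ^ p - a ^ p) / p := by
    rw [integral_rpow (Or.inl (by linarith))]
    norm_num
  have h2 : ∫ x in a..b, x ^ (p - 1) ≤ ∫ x in a..b, (b + 1) * (x ^ (p - 1) / (x + 1)) := by
    apply intervalIntegral.integral_mono_on hab hI1 (hI2.const_mul _)
    intro x hx
    have hx0 : 0 < x := ha.trans_le hx.1
    have hnn : 0 ≤ x ^ (p - 1) := Real.rpow_nonneg hx0.le _
    rw [mul_div_assoc', le_div_iff₀ (by linarith : (0:ℝ) < x + 1)]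
    nlinarith [hx.2]
  rw [h1, intervalIntegral.integral_const_mul, intervalIntegral.integral_of_le hab] at h2
  have := mul_le_mul_of_nonneg_left h2 hp.le
  rw [mul_div_cancel₀ _ (ne_of_gt hp)] at this
  linarith [this]

lemma sUaux_main {p : ℝ} (hp : 0 < p) (hp1 : p < 1) {a b Z : ℝ}
    (ha : 0 < a) (hab : a ≤ b) (hZ : 0 < Z) :
    (b * Z) ^ p ≤ (a * Z) ^ p + p * ((b + 1) * Z) * Z ^ (p - 1) *
      ((∫ r in Ioi a, r ^ (p - 1) / (r + 1)) - ∫ r in Ioi b, r ^ (p - 1) / (r + 1)) := by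
  have hb : 0 < b := ha.trans_le hab
  rw [sUaux_split hp hp1 ha hab, Real.mul_rpow hb.le hZ.le, Real.mul_rpow ha.le hZ.le]
  have hmul : Z ^ p = Z * Z ^ (p - 1) := by
    rw [show p = 1 + (p - 1) by ring, Real.rpow_add hZ, Real.rpow_one]
    ring_nf
  have hkey := sUaux_key hp hp1 ha hab
  have h := mul_le_mul_of_nonneg_right hkey (Real.rpow_nonneg hZ.le p)
  have e : p * ((b + 1) * Z) * Z ^ (p - 1) = p * (b + 1) * Z ^ p := by
    rw [hmul]; ring
  rw [e]
  nlinarith [h]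

/-- Jump condition: for `0 < p < 1`, all `z < 0`, `z ≤ x ≤ y` with `y ≥ 0`, and all `d ≥ 0`,
`U(x+d, max(x+d,y), z) ≤ U(x,y,z) + d·U_x(x,y,z)`, where
`U_x(x,y,z) = p(−z)^(p−1) ∫_{max(−y/z,1/p−1)}^∞ r^(p−1)/(r+1) dr`. -/
theorem specialU_jump (p : ℝ) (hp : 0 < p) (hp1 : p < 1)
    (z x y : ℝ) (hz : z < 0) (hzx : z ≤ x) (hxy : x ≤ y) (hy : 0 ≤ y)
    (d : ℝ) (hd : 0 ≤ d) :
    specialU p (x + d) (max (x + d) y) z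
      ≤ specialU p x y z
        + d * (p * (-z) ^ (p - 1)
            * ∫ r in Set.Ioi (max (-y / z) (1 / p - 1)), r ^ (p - 1) / (r + 1)) := by
  have hz0 : z ≠ 0 := ne_of_lt hz
  have hZ : 0 < -z := neg_pos.mpr hz
  have ht0 : 0 < 1 / p - 1 := by
    have : 1 < 1 / p := one_lt_one_div hp hp1
    linarith
  have hdivz : ∀ u : ℝ, -u / z = u / (-z) := fun u => by field_simp
  rcases le_or_gt (x + d) y with hcase | hcase
  · -- max = y : equality case
    rw [max_eq_right hcase]
    by_cases h1 : y > -(1 / p - 1) * z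
    · have hmax : max (-y / z) (1 / p - 1) = -y / z := by
        rw [max_eq_left]
        rw [hdivz, le_div_iff₀ hZ]
        nlinarith
      rw [specialU, specialU, if_pos h1, if_pos h1, hmax]
      apply le_of_eq; ring
    · have hmax : max (-y / z) (1 / p - 1) = 1 / p - 1 := by
        rw [max_eq_right]
        rw [hdivz, div_le_iff₀ hZ]
        push_neg at h1
        nlinarith
      rw [specialU, specialU, if_neg h1, if_neg h1, hmax]
      apply le_of_eq; ring
  · -- max = x + d
    rw [max_eq_left hcase.le]
    by_cases h1 : y > -(1 / p - 1) * z
    · -- B1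
      have h2 : x + d > -(1 / p - 1) * z := lt_trans h1 hcase
      have hmax : max (-y / z) (1 / p - 1) = -y / z := by
        rw [max_eq_left]
        rw [hdivz, le_div_iff₀ hZ]
        nlinarith
      rw [specialU, specialU, if_pos h2, if_pos h1, hmax, hdivz y, hdivz (x + d)]
      have hy0 : 0 < y := by nlinarith
      have ha : 0 < y / (-z) := div_pos hy0 hZ
      have hab : y / (-z) ≤ (x + d) / (-z) := by gcongr
      have key := sUaux_main hp hp1 ha hab hZ
      rw [div_mul_cancel₀ y (ne_of_gt hZ), div_mul_cancel₀ (x + d) (ne_of_gt hZ)] at key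
      have e : ((x + d) / (-z) + 1) * (-z) = x + d - z := by rw [add_mul, div_mul_cancel₀ _ (ne_of_gt hZ), one_mul]; ring
      rw [e] at key
      nlinarith [key]
    · -- B2
      have hmax : max (-y / z) (1 / p - 1) = 1 / p - 1 := by
        rw [max_eq_right]
        rw [hdivz, div_le_iff₀ hZ]
        push_neg at h1
        nlinarith
      by_cases h2 : x + d > -(1 / p - 1) * z
      · -- B2b
        rw [specialU, specialU, if_pos h2, if_neg h1, hmax, hdivz (x + d)]
        have hab : 1 / p - 1 ≤ (x + d) / (-z) := by
          rw [le_div_iff₀ hZ]; nlinarith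
        have key := sUaux_main hp hp1 ht0 hab hZ
        rw [div_mul_cancel₀ (x + d) (ne_of_gt hZ)] at key
        have e : ((x + d) / (-z) + 1) * (-z) = x + d - z := by rw [add_mul, div_mul_cancel₀ _ (ne_of_gt hZ), one_mul]; ring
        rw [e, Real.mul_rpow ht0.le hZ.le] at key
        nlinarith [key]
      · -- B2a
        rw [specialU, specialU, if_neg h2, if_neg h1, hmax]
        apply le_of_eq; ring
end

section
/- Let 1/2 < p < 1 and define, for real x, y ≥ 0 and z < 0: U(x,y,z) = (1 − 𝔠_p^p)·(−z)^p + p·(−z)^{p−1}·(x−z)·∫_1^∞ r^{p−1}/(r+1) dr if y < −z, and U(x,y,z) = y^p − 𝔠_p^p·(−z)^p + p·(−z)^{p−1}·(x−z)·∫_{−y/z}^∞ r^{p−1}/(r+1) dr if y ≥ −z. Then for all z < 0, all x, y with z < x < y, and all d ≥ 0, one has U(x+d, max(x+d, y), z) ≤ U(x,y,z) + d·p·(−z)^{p−1}·∫_{max(−y/z, 1)}^∞ r^{p−1}/(r+1) dr. -/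
open MeasureTheory
open Set

/-- The special function `U(x,y,z)` used in the proof of `‖M‖_p ≤ 𝔠_p‖M⁻‖_p` for
`1/2 < p < 1`, with `𝔠_p^p = 1 + ∫_1^∞ s^(p−1)/(s+1) ds`. -/
noncomputable def specialV (p : ℝ) (x y z : ℝ) : ℝ :=
  if y < -z then
    (1 - (1 + ∫ s in Set.Ioi (1 : ℝ), s ^ (p - 1) / (s + 1))) * (-z) ^ p
      + p * (-z) ^ (p - 1) * (x - z) * ∫ r in Set.Ioi (1 : ℝ), r ^ (p - 1) / (r + 1)
  else
    y ^ p - (1 + ∫ s in Set.Ioi (1 : ℝ), s ^ (p - 1) / (s + 1)) * (-z) ^ p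
      + p * (-z) ^ (p - 1) * (x - z) * ∫ r in Set.Ioi (-y / z), r ^ (p - 1) / (r + 1)

private lemma intOn (p : ℝ) (hp : 1 / 2 < p) (hp1 : p < 1) {a : ℝ} (ha : 0 < a) :
    IntegrableOn (fun r : ℝ => r ^ (p - 1) / (r + 1)) (Ioi a) := by
  have h2 : IntegrableOn (fun r : ℝ => r ^ (p - 2)) (Ioi a) :=
    integrableOn_Ioi_rpow_of_lt (by linarith) ha
  refine h2.mono' ?_ ?_
  · exact ((by measurability : Measurable fun r : ℝ => r ^ (p - 1) / (r + 1))).aestronglyMeasurable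
  · filter_upwards [ae_restrict_mem measurableSet_Ioi] with r hr
    have hr0 : 0 < r := ha.trans hr
    rw [Real.norm_eq_abs, abs_of_nonneg (by positivity)]
    have hre : r ^ (p - 2) = r ^ (p - 1) / r := by
      rw [show p - 2 = p - 1 - 1 by ring, Real.rpow_sub hr0, Real.rpow_one]
    rw [hre]
    exact div_le_div_of_nonneg_left (by positivity) hr0 (by linarith)

private lemma key (p : ℝ) (hp : 1 / 2 < p) (hp1 : p < 1) {s t : ℝ}
    (hs : 0 < s) (hst : s ≤ t) :
    t ^ p - s ^ p ≤ p * (t + 1) *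
      ((∫ r in Ioi s, r ^ (p - 1) / (r + 1)) - ∫ r in Ioi t, r ^ (p - 1) / (r + 1)) := by
  have ht : 0 < t := hs.trans_le hst
  have hp0 : (0:ℝ) < p := by linarith
  have ht1 : (0:ℝ) < t + 1 := by linarith
  have hsplit : (∫ r in Ioi s, r ^ (p - 1) / (r + 1))
      = (∫ r in Ioc s t, r ^ (p - 1) / (r + 1)) + ∫ r in Ioi t, r ^ (p - 1) / (r + 1) := by
    rw [← setIntegral_union (Ioc_disjoint_Ioi le_rfl) measurableSet_Ioi
      ((intOn p hp hp1 hs).mono_set Ioc_subset_Ioi_self) (intOn p hp hp1 ht),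
      Ioc_union_Ioi_eq_Ioi hst]
  rw [hsplit, add_sub_cancel_right]
  have hint1 : IntegrableOn (fun r : ℝ => r ^ (p - 1)) (Ioc s t) := by
    apply (ContinuousOn.integrableOn_Icc ?_).mono_set Ioc_subset_Icc_self
    exact continuousOn_id.rpow_const fun x hx => Or.inl (hs.trans_le hx.1).ne'
  have hmono : ∫ r in Ioc s t, r ^ (p - 1) / (t + 1) ≤ ∫ r in Ioc s t, r ^ (p - 1) / (r + 1) := by
    apply setIntegral_mono_on (hint1.div_const _)
      ((intOn p hp hp1 hs).mono_set Ioc_subset_Ioi_self) measurableSet_Ioc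
    intro r hr
    have hr0 : 0 < r := hs.trans hr.1
    exact div_le_div_of_nonneg_left (by positivity) (by linarith) (by linarith [hr.2])
  have hcalc : ∫ r in Ioc s t, r ^ (p - 1) = (t ^ p - s ^ p) / p := by
    rw [← intervalIntegral.integral_of_le hst, integral_rpow (Or.inl (by linarith))]
    rw [show p - 1 + 1 = p by ring]
  have h2 : ∫ r in Ioc s t, r ^ (p - 1) / (t + 1) = (t ^ p - s ^ p) / p / (t + 1) := by
    rw [integral_div, hcalc]
  rw [h2] at hmono
  calc t ^ p - s ^ p = p * (t + 1) * ((t ^ p - s ^ p) / p / (t + 1)) := by field_simp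
    _ ≤ p * (t + 1) * ∫ r in Ioc s t, r ^ (p - 1) / (r + 1) :=
        mul_le_mul_of_nonneg_left hmono (by positivity)

private lemma key2 (p : ℝ) (hp : 1 / 2 < p) (hp1 : p < 1) {a Y T : ℝ}
    (ha : 0 < a) (hY : 0 < Y) (hYT : Y ≤ T) :
    T ^ p - Y ^ p ≤ p * a ^ (p - 1) * (T + a) *
      ((∫ r in Ioi (Y / a), r ^ (p - 1) / (r + 1))
        - ∫ r in Ioi (T / a), r ^ (p - 1) / (r + 1)) := by
  have hT : 0 < T := hY.trans_le hYT
  have h := key p hp hp1 (s := Y / a) (t := T / a) (by positivity) (by gcongr)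
  have h' := mul_le_mul_of_nonneg_left h (Real.rpow_pos_of_pos ha p).le
  set D := (∫ r in Ioi (Y / a), r ^ (p - 1) / (r + 1))
        - ∫ r in Ioi (T / a), r ^ (p - 1) / (r + 1) with hD
  have e1 : a ^ p * ((T / a) ^ p - (Y / a) ^ p) = T ^ p - Y ^ p := by
    rw [Real.div_rpow hT.le ha.le, Real.div_rpow hY.le ha.le]
    field_simp
  have hpow : a ^ p = a ^ (p - 1) * a := by
    rw [← Real.rpow_add_one ha.ne' (p - 1)]; ring_nf
  have e2 : a ^ p * (p * (T / a + 1) * D) = p * a ^ (p - 1) * (T + a) * D := by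
    rw [hpow]; field_simp
  rw [e1, e2] at h'
  exact h'

/-- Jump condition: for `1/2 < p < 1`, all `z < 0`, `z < x < y` and `d ≥ 0`,
`U(x+d, max(x+d,y), z) ≤ U(x,y,z) + d·U_x(x,y,z)`, where
`U_x(x,y,z) = p(−z)^(p−1) ∫_{max(−y/z,1)}^∞ r^(p−1)/(r+1) dr`. -/
theorem specialV_jump (p : ℝ) (hp : 1 / 2 < p) (hp1 : p < 1)
    (z x y : ℝ) (hz : z < 0) (hzx : z < x) (hxy : x < y)
    (d : ℝ) (hd : 0 ≤ d) :
    specialV p (x + d) (max (x + d) y) z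
      ≤ specialV p x y z
        + d * (p * (-z) ^ (p - 1)
            * ∫ r in Set.Ioi (max (-y / z) 1), r ^ (p - 1) / (r + 1)) := by
  obtain ⟨a, ha, rfl⟩ : ∃ a : ℝ, 0 < a ∧ z = -a := ⟨-z, by linarith, by ring⟩
  simp only [specialV, neg_neg, neg_div_neg_eq] at *
  rcases lt_or_ge y a with hya | hay
  · -- Case A : y < a
    have hmax' : max (y / a) 1 = 1 := max_eq_right (by
      rw [div_le_one ha]; linarith)
    rcases lt_or_ge (max (x + d) y) a with hA1 | hA2
    · rw [if_pos hA1, if_pos hya, hmax']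
      exact le_of_eq (by ring)
    · have hyx : y ≤ x + d := by
        by_contra h
        push_neg at h
        rw [max_eq_right h.le] at hA2
        linarith
      have hxd : a ≤ x + d := by rwa [max_eq_left hyx] at hA2
      rw [max_eq_left hyx] at *
      rw [if_neg (not_lt.2 hxd), if_pos hya, hmax']
      have h := key2 p hp hp1 (a := a) (Y := a) (T := x + d) ha ha hxd
      rw [div_self ha.ne'] at h
      linarith [h]
  · -- Case B : a ≤ y
    have hmax' : max (y / a) 1 = y / a := max_eq_left (by
      rw [le_div_iff₀ ha]; linarith)
    have hmaxa : ¬ max (x + d) y < a := not_lt.2 (hay.trans (le_max_right _ _))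
    rw [if_neg hmaxa, if_neg (not_lt.2 hay), hmax']
    rcases le_total (x + d) y with hB1 | hB2
    · rw [max_eq_right hB1]
      exact le_of_eq (by ring)
    · rw [max_eq_left hB2]
      have h := key2 p hp hp1 (a := a) (Y := y) (T := x + d) ha (by linarith) hB2
      linarith [h]
end

section
/- Let (Ω,F,P) be a probability space with a filtration (F_n)_{n∈ℕ} and let X = (X_n)_{n∈ℕ} be a nonnegative martingale. Then for every 0 < p < 1 and every n, E[(max_{0≤k≤n} X_k)^p] ≤ (1−p)^{−1} · sup_{m∈ℕ} E[X_m^p]. -/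
open MeasureTheory Set

lemma shao_aux_int {p : ℝ} (hp : 0 < p) (hp1 : p < 1) {x : ℝ} (hx : 0 ≤ x) :
    ∫⁻ t in Set.Ioi (0:ℝ), ENNReal.ofReal (t ^ (p-2) * min x t)
      = ENNReal.ofReal (x ^ p / p + x ^ p / (1-p)) := by
  rcases eq_or_lt_of_le hx with h0 | h0
  · have e0 : ∫⁻ t in Set.Ioi (0:ℝ), ENNReal.ofReal (t ^ (p-2) * min x t)
        = ∫⁻ _ in Set.Ioi (0:ℝ), 0 :=
      setLIntegral_congr_fun measurableSet_Ioi (fun t ht => by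
        rw [← h0, min_eq_left (le_of_lt ht), mul_zero, ENNReal.ofReal_zero])
    rw [e0, lintegral_zero, ← h0, Real.zero_rpow hp.ne']
    norm_num
  · rw [← Set.Ioc_union_Ioi_eq_Ioi h0.le,
      lintegral_union measurableSet_Ioi (Set.Ioc_disjoint_Ioi le_rfl)]
    have hxp : x ^ p = x ^ (p-1) * x := by
      rw [← Real.rpow_add_one h0.ne' (p-1)]; norm_num
    have h1 : ∫⁻ t in Set.Ioc 0 x, ENNReal.ofReal (t ^ (p-2) * min x t)
        = ENNReal.ofReal (x ^ p / p) := by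
      have e1 : ∫⁻ t in Set.Ioc 0 x, ENNReal.ofReal (t ^ (p-2) * min x t)
          = ∫⁻ t in Set.Ioc 0 x, ENNReal.ofReal (t ^ (p-1)) :=
        setLIntegral_congr_fun measurableSet_Ioc (fun t ht => by
          rw [min_eq_right ht.2]
          congr 1
          rw [show p - 1 = (p-2) + 1 by ring, Real.rpow_add_one (ne_of_gt ht.1)])
      rw [e1, ← ofReal_integral_eq_lintegral_ofReal]
      · rw [← intervalIntegral.integral_of_le h0.le,
          integral_rpow (Or.inl (by linarith))]
        norm_num
        rw [Real.zero_rpow hp.ne']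
        norm_num
      · exact (intervalIntegrable_iff_integrableOn_Ioc_of_le h0.le).mp
          (intervalIntegral.intervalIntegrable_rpow' (by linarith))
      · filter_upwards [ae_restrict_mem measurableSet_Ioc] with t ht
        exact Real.rpow_nonneg ht.1.le _
    have h2 : ∫⁻ t in Set.Ioi x, ENNReal.ofReal (t ^ (p-2) * min x t)
        = ENNReal.ofReal (x ^ p / (1-p)) := by
      have e2 : ∫⁻ t in Set.Ioi x, ENNReal.ofReal (t ^ (p-2) * min x t)
          = ∫⁻ t in Set.Ioi x, ENNReal.ofReal (x * t ^ (p-2)) :=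
        setLIntegral_congr_fun measurableSet_Ioi (fun t ht => by
          rw [min_eq_left (le_of_lt ht), mul_comm])
      rw [e2, ← ofReal_integral_eq_lintegral_ofReal]
      · rw [integral_const_mul, integral_Ioi_rpow_of_lt (by linarith) h0]
        congr 1
        rw [show p - 2 + 1 = p - 1 by ring]
        rw [hxp]
        have hne : (1:ℝ) - p ≠ 0 := by intro h; linarith
        have hne2 : p - 1 ≠ 0 := by intro h; linarith
        field_simp
        ring
      · exact (integrableOn_Ioi_rpow_of_lt (by linarith) h0).const_mul x
      · filter_upwards [ae_restrict_mem measurableSet_Ioi] with t ht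
        exact mul_nonneg hx (Real.rpow_nonneg (h0.trans ht).le _)
    rw [h1, h2, ENNReal.ofReal_add (by positivity)
      (div_nonneg (Real.rpow_nonneg hx _) (by linarith))]


lemma shao_dubins {Ω : Type*} {m0 : MeasurableSpace Ω} {P : Measure Ω} [IsProbabilityMeasure P]
    (ℱ : Filtration ℕ m0) (X : ℕ → Ω → ℝ)
    (hX : Martingale X ℱ P) (hpos : ∀ n, ∀ᵐ ω ∂P, 0 ≤ X n ω) (n : ℕ)
    {t : ℝ} (ht : 0 < t) :
    t * (P {ω | t ≤ (Finset.range (n + 1)).sup' (by simp) fun k => X k ω}).toReal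
      ≤ ∫ ω, min (X 0 ω) t ∂P := by
  set Z : ℕ → Ω → ℝ := fun k ω => min (X k ω) t with hZdef
  have hZint : ∀ k, Integrable (Z k) P := fun k => (hX.integrable k).inf (integrable_const t)
  have hZ : Supermartingale Z ℱ P := by
    refine ⟨fun k => ((continuous_id.min continuous_const :
        Continuous fun y : ℝ => min y t)).comp_stronglyMeasurable (hX.stronglyAdapted k),
      fun i j hij => ?_, hZint⟩
    have h1 : P[Z j | ℱ i] ≤ᵐ[P] P[X j | ℱ i] :=
      condExp_mono (hZint j) (hX.integrable j) (ae_of_all _ fun ω => min_le_left _ _)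
    have h2 : P[Z j | ℱ i] ≤ᵐ[P] fun _ => t := by
      have h := condExp_mono (μ := P) (m := ℱ i) (hZint j) (integrable_const t)
        (ae_of_all _ fun ω => min_le_right (X j ω) t)
      rwa [condExp_const (ℱ.le i)] at h
    filter_upwards [h1, h2, hX.2 i j hij] with ω hω1 hω2 hω3
    exact le_min (le_of_le_of_eq hω1 hω3) hω2
  set T : Ω → ℕ∞ := fun ω => ((hittingBtwn X (Set.Ici t) 0 n ω : ℕ) : ℕ∞) with hTdef
  have hT : IsStoppingTime ℱ T := hX.stronglyAdapted.adapted.isStoppingTime_hittingBtwn measurableSet_Ici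
  have hTle : ∀ ω, T ω ≤ n := fun ω => by rw [hTdef]; exact ENat.natCast_le_natCast.mpr (hittingBtwn_le ω)
  have hsvint : Integrable (stoppedValue Z T) P := integrable_stoppedValue ℕ hT hZint hTle
  have opt : ∫ ω, stoppedValue Z T ω ∂P ≤ ∫ ω, Z 0 ω ∂P := by
    have h := hZ.neg.expected_stoppedValue_mono (isStoppingTime_const ℱ 0) hT
      (fun ω => by simp; exact bot_le) hTle
    simp only [stoppedValue, Pi.neg_apply, integral_neg, neg_le_neg_iff] at h
    exact h
  set A : Set Ω := {ω | t ≤ (Finset.range (n + 1)).sup' (by simp) fun k => X k ω} with hAdef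
  have hA : MeasurableSet A := by
    have hMm : Measurable fun ω => (Finset.range (n + 1)).sup' (by simp) fun k => X k ω :=
      Finset.measurable_range_sup'' fun k _ =>
        ((hX.stronglyMeasurable k).mono (ℱ.le k)).measurable
    exact measurableSet_le measurable_const hMm
  have key : ∀ ω ∈ A, stoppedValue Z T ω = t := by
    intro ω hω
    simp only [hAdef, Set.mem_setOf_eq] at hω
    obtain ⟨k, hk, hk2⟩ := (Finset.le_sup'_iff _).mp hω
    have hmem : ∃ j ∈ Set.Icc 0 n, X j ω ∈ Set.Ici t :=
      ⟨k, ⟨Nat.zero_le _, Finset.mem_range_succ_iff.mp hk⟩, hk2⟩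
    have hst := stoppedValue_hittingBtwn_mem hmem
    simp only [stoppedValue] at hst ⊢
    exact min_eq_right hst
  have lower : t * (P A).toReal ≤ ∫ ω, stoppedValue Z T ω ∂P := by
    have e : ∫ ω in A, stoppedValue Z T ω ∂P = t * (P A).toReal := by
      rw [setIntegral_congr_fun hA key, setIntegral_const, smul_eq_mul, mul_comm]; rfl
    rw [← e]
    have hnn : 0 ≤ᵐ[P] stoppedValue Z T := by
      filter_upwards [ae_all_iff.mpr hpos] with ω hω
      exact le_min (hω _) ht.le
    exact setIntegral_le_integral hsvint hnn
  exact le_trans lower opt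


/-- Shao's inequality: if `X` is a nonnegative discrete-time martingale and `0 < p < 1`,
then `E[(max_{0≤k≤n} X_k)^p] ≤ (1−p)⁻¹ · sup_m E[X_m^p]`. -/
theorem shao_maximal_inequality
    {Ω : Type*} {m0 : MeasurableSpace Ω} {P : Measure Ω} [IsProbabilityMeasure P]
    (ℱ : Filtration ℕ m0) (X : ℕ → Ω → ℝ)
    (hX : Martingale X ℱ P) (hpos : ∀ n, ∀ᵐ ω ∂P, 0 ≤ X n ω)
    (p : ℝ) (hp : 0 < p) (hp1 : p < 1) (n : ℕ) :
    ∫ ω, ((Finset.range (n + 1)).sup' (by simp) fun k => X k ω) ^ p ∂P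
      ≤ (1 - p)⁻¹ * ⨆ m : ℕ, ∫ ω, (X m ω) ^ p ∂P := by
  have hXm : ∀ k, Measurable (X k) := fun k =>
    ((hX.stronglyMeasurable k).mono (ℱ.le k)).measurable
  set M : Ω → ℝ := fun ω => (Finset.range (n + 1)).sup' (by simp) fun k => X k ω with hMdef
  have hMm : Measurable M := Finset.measurable_range_sup'' fun k _ => hXm k
  have hMnn : ∀ᵐ ω ∂P, 0 ≤ M ω := by
    filter_upwards [hpos 0] with ω hω
    have h0 : X 0 ω ≤ (Finset.range (n + 1)).sup' (by simp) fun k => X k ω :=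
      Finset.le_sup' (fun k => X k ω) (Finset.mem_range.mpr (Nat.succ_pos n))
    exact le_trans hω h0
  -- integrability of rpow
  have hrpow_le : ∀ m : ℕ, ∀ ω, 0 ≤ X m ω → X m ω ^ p ≤ 1 + X m ω := by
    intro m ω hω
    rcases le_total (X m ω) 1 with h | h
    · exact le_trans (Real.rpow_le_one hω h hp.le) (by linarith)
    · calc X m ω ^ p ≤ X m ω ^ (1:ℝ) :=
            Real.rpow_le_rpow_of_exponent_le h hp1.le
        _ = X m ω := Real.rpow_one _
        _ ≤ 1 + X m ω := by linarith
  have hint_rpow : ∀ m, Integrable (fun ω => X m ω ^ p) P := by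
    intro m
    refine Integrable.mono' ((integrable_const (1:ℝ)).add (hX.integrable m).abs)
      ((by fun_prop : Measurable fun ω => X m ω ^ p).aestronglyMeasurable) ?_
    filter_upwards [hpos m] with ω hω
    rw [Real.norm_eq_abs, abs_of_nonneg (Real.rpow_nonneg hω _)]
    exact le_trans (hrpow_le m ω hω) (by simp [Pi.add_apply]; nlinarith [le_abs_self (X m ω)])
  -- layer cake
  have g_intble : ∀ t > (0:ℝ), IntervalIntegrable (fun s => p * s ^ (p-1)) volume 0 t :=
    fun t _ => (intervalIntegral.intervalIntegrable_rpow' (by linarith)).const_mul p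
  have g_nn : ∀ᵐ t ∂(volume.restrict (Set.Ioi (0:ℝ))), 0 ≤ p * t ^ (p-1) := by
    filter_upwards [ae_restrict_mem measurableSet_Ioi] with t ht
    exact mul_nonneg hp.le (Real.rpow_nonneg (le_of_lt ht) _)
  have lc := lintegral_comp_eq_lintegral_meas_lt_mul P hMnn hMm.aemeasurable g_intble g_nn
  have e_lhs : ∫⁻ ω, ENNReal.ofReal (∫ s in (0:ℝ)..(M ω), p * s ^ (p-1)) ∂P
      = ∫⁻ ω, ENNReal.ofReal (M ω ^ p) ∂P := by
    refine lintegral_congr_ae ?_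
    filter_upwards [hMnn] with ω hω
    rw [intervalIntegral.integral_const_mul, integral_rpow (Or.inl (by linarith)),
      show p - 1 + 1 = p by ring, Real.zero_rpow hp.ne']
    congr 1
    field_simp
    ring
  rw [e_lhs] at lc
  -- pointwise bound on the t-integrand
  have hI0 : Integrable (fun ω => min (X 0 ω) (1:ℝ)) P := (hX.integrable 0).inf (integrable_const 1)
  have key : ∀ t : ℝ, 0 < t →
      P {a | t < M a} * ENNReal.ofReal (p * t ^ (p-1))
        ≤ ENNReal.ofReal p * ∫⁻ ω, ENNReal.ofReal (t ^ (p-2) * min (X 0 ω) t) ∂P := by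
    intro t ht
    have hmin_int : Integrable (fun ω => min (X 0 ω) t) P :=
      (hX.integrable 0).inf (integrable_const t)
    have hmin_nn : 0 ≤ᵐ[P] fun ω => min (X 0 ω) t := by
      filter_upwards [hpos 0] with ω hω; exact le_min hω ht.le
    set I : ℝ := ∫ ω, min (X 0 ω) t ∂P with hIdef
    have hInn : 0 ≤ I := integral_nonneg_of_ae hmin_nn
    have hPA : P {a | t < M a} ≤ ENNReal.ofReal (t⁻¹ * I) := by
      have hsub : {a | t < M a} ⊆ {a | t ≤ M a} := Set.setOf_subset_setOf.mpr fun a => le_of_lt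
      refine le_trans (measure_mono hsub) ?_
      have hD := shao_dubins ℱ X hX hpos n ht
      rw [← ENNReal.ofReal_toReal (measure_ne_top P {ω | t ≤ M ω})]
      apply ENNReal.ofReal_le_ofReal
      have : (P {ω | t ≤ M ω}).toReal = t⁻¹ * (t * (P {ω | t ≤ M ω}).toReal) := by
        field_simp
      rw [this]
      exact mul_le_mul_of_nonneg_left hD (inv_nonneg.mpr ht.le)
    have htp2 : t ^ (p-2) = t ^ (p-1) * t⁻¹ := by
      rw [show p - 2 = (p-1) + (-1) by ring, Real.rpow_add ht, Real.rpow_neg_one]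
    calc P {a | t < M a} * ENNReal.ofReal (p * t ^ (p-1))
        ≤ ENNReal.ofReal (t⁻¹ * I) * ENNReal.ofReal (p * t ^ (p-1)) :=
          mul_le_mul_left hPA _
      _ = ENNReal.ofReal p * ENNReal.ofReal (t ^ (p-2) * I) := by
          rw [← ENNReal.ofReal_mul (mul_nonneg (inv_nonneg.mpr ht.le) hInn),
            ← ENNReal.ofReal_mul hp.le]
          congr 1
          rw [htp2]; ring
      _ = ENNReal.ofReal p * ∫⁻ ω, ENNReal.ofReal (t ^ (p-2) * min (X 0 ω) t) ∂P := by
          congr 1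
          rw [ENNReal.ofReal_mul (Real.rpow_nonneg ht.le _),
            ofReal_integral_eq_lintegral_ofReal hmin_int hmin_nn,
            ← lintegral_const_mul' _ _ ENNReal.ofReal_ne_top]
          refine lintegral_congr fun ω => ?_
          rw [ENNReal.ofReal_mul (Real.rpow_nonneg ht.le _)]
  -- assemble
  have hF_meas : Measurable (Function.uncurry fun (t : ℝ) (ω : Ω) =>
      ENNReal.ofReal (t ^ (p-2) * min (X 0 ω) t)) := by
    have h0 := hXm 0
    exact (by fun_prop :
      Measurable fun q : ℝ × Ω => ENNReal.ofReal (q.1 ^ (p-2) * min (X 0 q.2) q.1))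
  have big : ∫⁻ ω, ENNReal.ofReal (M ω ^ p) ∂P
      ≤ ENNReal.ofReal ((1-p)⁻¹ * ∫ ω, X 0 ω ^ p ∂P) := by
    rw [lc]
    calc ∫⁻ t in Set.Ioi (0:ℝ), P {a | t < M a} * ENNReal.ofReal (p * t ^ (p-1))
        ≤ ∫⁻ t in Set.Ioi (0:ℝ),
            ENNReal.ofReal p * ∫⁻ ω, ENNReal.ofReal (t ^ (p-2) * min (X 0 ω) t) ∂P := by
          refine lintegral_mono_ae ?_
          rw [ae_restrict_iff' measurableSet_Ioi]
          exact ae_of_all _ fun t ht => key t ht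
      _ = ENNReal.ofReal p * ∫⁻ t in Set.Ioi (0:ℝ),
            ∫⁻ ω, ENNReal.ofReal (t ^ (p-2) * min (X 0 ω) t) ∂P ∂(volume) := by
          rw [lintegral_const_mul' _ _ ENNReal.ofReal_ne_top]
      _ = ENNReal.ofReal p * ∫⁻ ω, ∫⁻ t in Set.Ioi (0:ℝ),
            ENNReal.ofReal (t ^ (p-2) * min (X 0 ω) t) ∂(volume) ∂P := by
          rw [lintegral_lintegral_swap hF_meas.aemeasurable]
      _ = ENNReal.ofReal p * ∫⁻ ω, ENNReal.ofReal (X 0 ω ^ p / p + X 0 ω ^ p / (1-p)) ∂P := by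
          congr 1
          refine lintegral_congr_ae ?_
          filter_upwards [hpos 0] with ω hω
          exact shao_aux_int hp hp1 hω
      _ = ENNReal.ofReal ((1-p)⁻¹ * ∫ ω, X 0 ω ^ p ∂P) := by
          have e0 : ∀ ω : Ω, X 0 ω ^ p / p + X 0 ω ^ p / (1-p)
              = (p⁻¹ + (1-p)⁻¹) * X 0 ω ^ p := fun ω => by
            rw [div_eq_inv_mul, div_eq_inv_mul]; ring
          simp only [e0]
          have hnn2 : 0 ≤ᵐ[P] fun ω => (p⁻¹ + (1-p)⁻¹) * X 0 ω ^ p := by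
            filter_upwards [hpos 0] with ω hω
            have h1 := Real.rpow_nonneg hω p
            have h2 : (0:ℝ) < 1 - p := by linarith
            positivity
          rw [← ofReal_integral_eq_lintegral_ofReal
            ((hint_rpow 0).const_mul _ : Integrable (fun ω => (p⁻¹ + (1-p)⁻¹) * X 0 ω ^ p) P)
            hnn2, ← ENNReal.ofReal_mul hp.le, integral_const_mul]
          congr 1
          have h1p : (1:ℝ) - p ≠ 0 := by intro h; linarith
          field_simp
          ring
  -- convert to Bochner
  have hMp_eq : ∫ ω, M ω ^ p ∂P = (∫⁻ ω, ENNReal.ofReal (M ω ^ p) ∂P).toReal := by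
    refine integral_eq_lintegral_of_nonneg_ae ?_ ((by fun_prop : Measurable fun ω => M ω ^ p).aestronglyMeasurable)
    filter_upwards [hMnn] with ω hω
    exact Real.rpow_nonneg hω _
  have hX0p_nn : 0 ≤ ∫ ω, X 0 ω ^ p ∂P :=
    integral_nonneg_of_ae (by filter_upwards [hpos 0] with ω hω; exact Real.rpow_nonneg hω _)
  have step1 : ∫ ω, M ω ^ p ∂P ≤ (1-p)⁻¹ * ∫ ω, X 0 ω ^ p ∂P := by
    rw [hMp_eq]
    exact ENNReal.toReal_le_of_le_ofReal
      (mul_nonneg (inv_nonneg.mpr (by linarith)) hX0p_nn) big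
  refine le_trans step1 (mul_le_mul_of_nonneg_left ?_ (inv_nonneg.mpr (by linarith)))
  -- E[X_0^p] ≤ sup
  have hbdd : BddAbove (Set.range fun m => ∫ ω, X m ω ^ p ∂P) := by
    refine ⟨1 + ∫ ω, X 0 ω ∂P, ?_⟩
    rintro _ ⟨m, rfl⟩
    have h1 : ∫ ω, X m ω ^ p ∂P ≤ ∫ ω, 1 + X m ω ∂P := by
      refine integral_mono_ae (hint_rpow m) ((integrable_const 1).add (hX.integrable m)) ?_
      filter_upwards [hpos m] with ω hω
      exact hrpow_le m ω hω
    have h2 : ∫ ω, X m ω ∂P = ∫ ω, X 0 ω ∂P := by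
      have e1 : ∫ x, (P[X m | ℱ 0]) x ∂P = ∫ x, X m x ∂P := integral_condExp (ℱ.le 0)
      rw [← e1]
      exact integral_congr_ae (hX.2 0 m (Nat.zero_le m))
    rw [integral_add (integrable_const 1) (hX.integrable m), integral_const] at h1
    simpa [h2] using h1
  exact le_ciSup hbdd 0
end
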